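/- Suppose both the primal SDP and the dual SDP are strictly feasible and A₁, …, A_m are linearly independent. Then for data (A₀(t), …, A_m(t), b(t)) continuous at t = 0 with values (A₀, …, A_m, b) at t = 0, the perturbed primal and dual are feasible for sufficiently small t and the optimal value of the perturbed dual SDP varies continuously at t = 0. -/

import Mathlib

open Matrix Set Filter Topology
noncomputable section
abbrev Mat (n : ℕ) := Matrix (Fin n) (Fin n) ℝ
def ip {n : ℕ} (A B : Mat n) : ℝ := ∑ i, ∑ j, A i j * B i j
def dualVals {n m : ℕ} (A₀ : Mat n) (A : Fin m → Mat n) (b : Fin m → ℝ) : Set ℝ :=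
  {v | ∃ X : Mat n, (X.PosSemidef ∧ ∀ k, ip (A k) X = b k) ∧ v = ip A₀ X}

def qd {n : ℕ} (M : Mat n) (x : Fin n → ℝ) : ℝ := ∑ i, ∑ j, x i * M i j * x j
def nrm {n : ℕ} (M : Mat n) : ℝ := ∑ i, ∑ j, |M i j|
def ssq {n : ℕ} (x : Fin n → ℝ) : ℝ := ∑ i, (x i)^2

lemma qd_eq_dot {n : ℕ} (M : Mat n) (x : Fin n → ℝ) : qd M x = x ⬝ᵥ M *ᵥ x := by
  simp [qd, dotProduct, mulVec, Finset.mul_sum, mul_assoc, mul_comm, mul_left_comm]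

lemma posSemidef_iff_qd {n : ℕ} {M : Mat n} (hM : M.IsHermitian) :
    M.PosSemidef ↔ ∀ x, 0 ≤ qd M x := by
  constructor
  · intro h x; rw [qd_eq_dot]; simpa using h.dotProduct_mulVec_nonneg x
  · intro h; exact Matrix.PosSemidef.of_dotProduct_mulVec_nonneg hM fun x => by simpa [qd_eq_dot] using h x

lemma posSemidef_qd {n : ℕ} {M : Mat n} (hM : M.PosSemidef) (x : Fin n → ℝ) :
    0 ≤ qd M x := by rw [qd_eq_dot]; simpa using hM.dotProduct_mulVec_nonneg x

lemma PosDef_qd {n : ℕ} {M : Mat n} (hM : M.PosDef) (x : Fin n → ℝ) (hx : x ≠ 0) :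
    0 < qd M x := by rw [qd_eq_dot]; simpa using hM.dotProduct_mulVec_pos hx

lemma ssq_nonneg {n : ℕ} (x : Fin n → ℝ) : 0 ≤ ssq x :=
  Finset.sum_nonneg fun i _ => sq_nonneg _

lemma qd_add {n : ℕ} (M N : Mat n) (x : Fin n → ℝ) : qd (M + N) x = qd M x + qd N x := by
  simp [qd, mul_add, add_mul, Finset.sum_add_distrib]

lemma qd_sub {n : ℕ} (M N : Mat n) (x : Fin n → ℝ) : qd (M - N) x = qd M x - qd N x := by
  simp [qd, mul_sub, sub_mul, Finset.sum_sub_distrib]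

lemma qd_smul {n : ℕ} (c : ℝ) (M : Mat n) (x : Fin n → ℝ) : qd (c • M) x = c * qd M x := by
  simp only [qd, Matrix.smul_apply, smul_eq_mul, Finset.mul_sum]
  congr 1; funext i; congr 1; funext j; ring

lemma qd_zero {n : ℕ} (x : Fin n → ℝ) : qd (0 : Mat n) x = 0 := by simp [qd]

lemma qd_finsum {n : ℕ} {ι : Type*} [DecidableEq ι] (s : Finset ι) (f : ι → Mat n)
    (x : Fin n → ℝ) : qd (∑ j ∈ s, f j) x = ∑ j ∈ s, qd (f j) x := by
  induction s using Finset.induction with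
  | empty => simp [qd_zero]
  | insert _ _ h ih => rw [Finset.sum_insert h, Finset.sum_insert h, qd_add, ih]

lemma qd_smul_vec {n : ℕ} (M : Mat n) (c : ℝ) (x : Fin n → ℝ) :
    qd M (c • x) = c^2 * qd M x := by
  simp only [qd, Pi.smul_apply, smul_eq_mul, Finset.mul_sum]
  congr 1; funext i; congr 1; funext j; ring

lemma ssq_smul {n : ℕ} (c : ℝ) (x : Fin n → ℝ) : ssq (c • x) = c^2 * ssq x := by
  simp [ssq, Finset.mul_sum]; ring_nf

lemma sq_le_ssq {n : ℕ} (x : Fin n → ℝ) (i : Fin n) : (x i)^2 ≤ ssq x :=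
  Finset.single_le_sum (fun j _ => sq_nonneg (x j)) (Finset.mem_univ i)

lemma abs_qd_le {n : ℕ} (M : Mat n) (x : Fin n → ℝ) : |qd M x| ≤ nrm M * ssq x := by
  have h1 : |qd M x| ≤ ∑ i, ∑ j, |M i j| * (|x i| * |x j|) := by
    refine (Finset.abs_sum_le_sum_abs _ _).trans ?_
    refine Finset.sum_le_sum fun i _ => (Finset.abs_sum_le_sum_abs _ _).trans ?_
    refine Finset.sum_le_sum fun j _ => ?_
    rw [abs_mul, abs_mul]; ring_nf; exact le_refl _
  refine h1.trans ?_
  rw [nrm, Finset.sum_mul]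
  refine Finset.sum_le_sum fun i _ => ?_
  rw [Finset.sum_mul]
  refine Finset.sum_le_sum fun j _ => ?_
  refine mul_le_mul_of_nonneg_left ?_ (abs_nonneg _)
  calc |x i| * |x j| ≤ ((x i)^2 + (x j)^2)/2 := by nlinarith [sq_nonneg (|x i| - |x j|), sq_abs (x i), sq_abs (x j)]
    _ ≤ ssq x := by
        have := sq_le_ssq x i; have := sq_le_ssq x j
        nlinarith [ssq_nonneg x]
lemma ip_add_right {n : ℕ} (A B C : Mat n) : ip A (B + C) = ip A B + ip A C := by
  simp [ip, mul_add, Finset.sum_add_distrib]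

lemma ip_smul_right {n : ℕ} (c : ℝ) (A B : Mat n) : ip A (c • B) = c * ip A B := by
  simp only [ip, Matrix.smul_apply, smul_eq_mul, Finset.mul_sum]
  congr 1; funext i; congr 1; funext j; ring

lemma ip_zero_right {n : ℕ} (A : Mat n) : ip A 0 = 0 := by simp [ip]

lemma ip_sub_right {n : ℕ} (A B C : Mat n) : ip A (B - C) = ip A B - ip A C := by
  simp [ip, mul_sub, Finset.sum_sub_distrib]

lemma ip_sub_left {n : ℕ} (A B C : Mat n) : ip (A - B) C = ip A C - ip B C := by
  simp [ip, sub_mul, Finset.sum_sub_distrib]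

lemma ip_finsum_right {n : ℕ} {ι : Type*} [DecidableEq ι] (A : Mat n) (s : Finset ι)
    (f : ι → Mat n) : ip A (∑ j ∈ s, f j) = ∑ j ∈ s, ip A (f j) := by
  induction s using Finset.induction with
  | empty => simp [ip_zero_right]
  | insert _ _ h ih => rw [Finset.sum_insert h, Finset.sum_insert h, ip_add_right, ih]

lemma abs_ip_le_nrm {n : ℕ} (A B : Mat n) (R : ℝ) (hB : ∀ i j, |B i j| ≤ R) :
    |ip A B| ≤ nrm A * R := by
  refine (Finset.abs_sum_le_sum_abs _ _).trans ?_
  rw [nrm, Finset.sum_mul]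
  refine Finset.sum_le_sum fun i _ => (Finset.abs_sum_le_sum_abs _ _).trans ?_
  rw [Finset.sum_mul]
  refine Finset.sum_le_sum fun j _ => ?_
  rw [abs_mul]
  exact mul_le_mul_of_nonneg_left (hB i j) (abs_nonneg _)

lemma ip_trans_qd {n : ℕ} (C B : Mat n) : ip (Cᵀ * C) B = ∑ k, qd B (fun i => C k i) := by
  calc ip (Cᵀ * C) B = ∑ i, ∑ j, ∑ k, C k i * B i j * C k j := by
        simp only [ip, Matrix.mul_apply, Matrix.transpose_apply, Finset.sum_mul]
        congr 1; funext i; congr 1; funext j; congr 1; funext k; ring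
    _ = ∑ i, ∑ k, ∑ j, C k i * B i j * C k j := by
        congr 1; funext i; exact Finset.sum_comm
    _ = ∑ k, ∑ i, ∑ j, C k i * B i j * C k j := Finset.sum_comm
    _ = ∑ k, qd B (fun i => C k i) := rfl

lemma ip_psd_nonneg {n : ℕ} {A B : Mat n} (hA : A.PosSemidef) (hB : B.PosSemidef) :
    0 ≤ ip A B := by
  open scoped MatrixOrder in obtain ⟨C, hC⟩ := CStarAlgebra.nonneg_iff_eq_star_mul_self.mp hA.nonneg
  have : Cᴴ = Cᵀ := by ext i j; simp
  rw [hC, star_eq_conjTranspose, this, ip_trans_qd]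
  exact Finset.sum_nonneg fun k _ => posSemidef_qd hB _

lemma ip_one_right {n : ℕ} (A : Mat n) : ip A 1 = ∑ i, A i i := by
  simp [ip, Matrix.one_apply]

lemma ip_one_left {n : ℕ} (A : Mat n) : ip 1 A = ∑ i, A i i := by
  simp [ip, Matrix.one_apply]
def bd {n : ℕ} (M : Mat n) (u w : Fin n → ℝ) : ℝ := ∑ i, ∑ j, u i * M i j * w j

lemma qd_eq_bd {n : ℕ} (M : Mat n) (x : Fin n → ℝ) : qd M x = bd M x x := rfl

lemma bd_single {n : ℕ} (M : Mat n) (i j : Fin n) (a c : ℝ) :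
    bd M (Pi.single i a) (Pi.single j c) = a * M i j * c := by
  simp [bd, Pi.single_apply, ite_mul, mul_ite, Finset.sum_ite_eq']

lemma bd_add_left {n : ℕ} (M : Mat n) (u v w : Fin n → ℝ) :
    bd M (u + v) w = bd M u w + bd M v w := by
  simp [bd, add_mul, Finset.sum_add_distrib]

lemma bd_add_right {n : ℕ} (M : Mat n) (u v w : Fin n → ℝ) :
    bd M u (v + w) = bd M u v + bd M u w := by
  simp [bd, mul_add, Finset.sum_add_distrib]

lemma psd_diag_nonneg {n : ℕ} {M : Mat n} (hM : M.PosSemidef) (i : Fin n) : 0 ≤ M i i := by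
  have := posSemidef_qd hM (Pi.single i 1)
  rwa [qd_eq_bd, bd_single, one_mul, mul_one] at this

lemma psd_symm_apply {n : ℕ} {M : Mat n} (hM : M.PosSemidef) (i j : Fin n) : M j i = M i j := by
  have := congrFun (congrFun hM.1 i) j
  simpa [Matrix.conjTranspose_apply] using this

lemma psd_entry_le_trace {n : ℕ} {M : Mat n} (hM : M.PosSemidef) (i j : Fin n) :
    |M i j| ≤ ∑ k, M k k := by
  have hdiag := psd_diag_nonneg hM
  by_cases hij : i = j
  · subst hij
    rw [abs_of_nonneg (hdiag i)]
    exact Finset.single_le_sum (fun k _ => hdiag k) (Finset.mem_univ i)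
  · set s : ℝ := if 0 ≤ M i j then -1 else 1 with hs
    have h1 : 0 ≤ qd M (Pi.single i 1 + Pi.single j s) := posSemidef_qd hM _
    rw [qd_eq_bd, bd_add_left, bd_add_right, bd_add_right, bd_single, bd_single, bd_single,
      bd_single] at h1
    have hsym := psd_symm_apply hM i j
    have hss : s * s = 1 := by by_cases h : 0 ≤ M i j <;> simp [hs, h]
    have e : s * M j j * s = M j j := by
      have h' : s * M j j * s = (s * s) * M j j := by ring
      rw [h', hss, one_mul]
    rw [hsym, e] at h1
    have h2 : 0 ≤ M i i + M j j + 2 * s * M i j := by linarith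
    have h3 : 2 * |M i j| ≤ M i i + M j j := by
      rcases le_or_gt 0 (M i j) with h | h
      · rw [abs_of_nonneg h]; simp only [hs, if_pos h] at h2; linarith
      · rw [abs_of_neg h]; simp only [hs, if_neg (not_le.mpr h)] at h2; linarith
    have h4 : M i i + M j j ≤ ∑ k, M k k := by
      have : ({i, j} : Finset (Fin n)).sum (fun k => M k k) ≤ ∑ k, M k k :=
        Finset.sum_le_sum_of_subset_of_nonneg (Finset.subset_univ _) (fun k _ _ => hdiag k)
      rwa [Finset.sum_pair hij] at this
    linarith [abs_nonneg (M i j)]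

lemma ssq_eq_zero {n : ℕ} {x : Fin n → ℝ} (h : ssq x = 0) : x = 0 := by
  funext i
  have := (Finset.sum_eq_zero_iff_of_nonneg (fun j _ => sq_nonneg (x j))).mp h i (Finset.mem_univ i)
  simpa [pow_eq_zero_iff] using this

lemma qd_continuous {n : ℕ} (M : Mat n) : Continuous (fun x : Fin n → ℝ => qd M x) := by
  unfold qd
  exact continuous_finset_sum _ fun i _ => continuous_finset_sum _ fun j _ =>
    (((continuous_apply i).mul continuous_const).mul (continuous_apply j))

lemma posdef_margin {n : ℕ} {M : Mat n} (hM : M.PosDef) :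
    ∃ μ : ℝ, 0 < μ ∧ ∀ x, μ * ssq x ≤ qd M x := by
  rcases isEmpty_or_nonempty (Fin n) with h | h
  · exact ⟨1, one_pos, fun x => by simp [ssq, qd]⟩
  · set K : Set (Fin n → ℝ) := {x | ssq x = 1} with hK
    have hssqc : Continuous (fun x : Fin n → ℝ => ssq x) := by
      unfold ssq
      exact continuous_finset_sum _ (fun i _ => (continuous_apply i).pow 2)
    have hcl : IsClosed K := isClosed_eq hssqc continuous_const
    have hbd : Bornology.IsBounded K := by
      refine (Metric.isBounded_closedBall (x := (0 : Fin n → ℝ)) (r := 1)).subset ?_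
      intro x hx
      simp only [Metric.mem_closedBall, dist_zero_right]
      refine (pi_norm_le_iff_of_nonneg zero_le_one).mpr fun i => ?_
      have h1 : (x i)^2 ≤ 1 := by rw [← hx]; exact sq_le_ssq x i
      rw [Real.norm_eq_abs, ← Real.sqrt_one, ← Real.sqrt_sq_eq_abs]
      exact Real.sqrt_le_sqrt h1
    have hKc : IsCompact K := Metric.isCompact_of_isClosed_isBounded hcl hbd
    have hKne : K.Nonempty := ⟨Pi.single h.some 1, by
      simp [hK, ssq, Pi.single_apply, Finset.sum_ite_eq']⟩
    obtain ⟨x₀, hx₀K, hmin⟩ := hKc.exists_isMinOn hKne (qd_continuous M).continuousOn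
    have hx₀ : x₀ ≠ 0 := by
      intro h0
      rw [hK] at hx₀K
      simp only [mem_setOf_eq, h0] at hx₀K
      simp [ssq] at hx₀K
    refine ⟨qd M x₀, PosDef_qd hM x₀ hx₀, fun x => ?_⟩
    by_cases hx : x = 0
    · simp [hx, ssq, qd]
    · have hs : 0 < ssq x := by
        rcases (ssq_nonneg x).lt_or_eq with h | h
        · exact h
        · exact absurd (ssq_eq_zero h.symm) hx
      set s := Real.sqrt (ssq x) with hsdef
      have hs' : 0 < s := Real.sqrt_pos.mpr hs
      have hs2 : s^2 = ssq x := Real.sq_sqrt hs.le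
      have hmem : (s⁻¹ • x) ∈ K := by
        rw [hK]
        simp only [mem_setOf_eq, ssq_smul]
        rw [inv_pow, hs2]
        field_simp
      have h5 := hmin hmem
      simp only [mem_setOf_eq] at h5
      rw [qd_smul_vec, inv_pow, hs2] at h5
      -- h5 : qd M x₀ ≤ (ssq x)⁻¹ * qd M x
      rw [mul_comm]
      calc ssq x * qd M x₀ ≤ ssq x * ((ssq x)⁻¹ * qd M x) :=
            mul_le_mul_of_nonneg_left h5 hs.le
        _ = qd M x := by field_simp
lemma ip_smul_left {n : ℕ} (c : ℝ) (A B : Mat n) : ip (c • A) B = c * ip A B := by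
  simp only [ip, Matrix.smul_apply, smul_eq_mul, Finset.mul_sum]
  congr 1; funext i; congr 1; funext j; ring

lemma ip_add_left {n : ℕ} (A B C : Mat n) : ip (A + B) C = ip A C + ip B C := by
  simp [ip, add_mul, Finset.sum_add_distrib]

lemma ip_zero_left {n : ℕ} (A : Mat n) : ip 0 A = 0 := by simp [ip]

lemma ip_finsum_left {n : ℕ} {ι : Type*} [DecidableEq ι] (s : Finset ι)
    (f : ι → Mat n) (A : Mat n) : ip (∑ j ∈ s, f j) A = ∑ j ∈ s, ip (f j) A := by
  induction s using Finset.induction with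
  | empty => simp [ip_zero_left]
  | insert _ _ h ih => rw [Finset.sum_insert h, Finset.sum_insert h, ip_add_left, ih]

lemma ip_self_eq_zero {n : ℕ} {X : Mat n} (h : ip X X = 0) : X = 0 := by
  ext i j
  by_contra hij
  have hpos : 0 < ip X X := by
    unfold ip
    have h1 : 0 < ∑ j', X i j' * X i j' := by
      refine Finset.sum_pos' (fun j' _ => mul_self_nonneg _) ⟨j, Finset.mem_univ j, ?_⟩
      exact mul_self_pos.mpr (by simpa using hij)
    exact Finset.sum_pos' (fun i' _ => Finset.sum_nonneg fun j' _ => mul_self_nonneg _)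
      ⟨i, Finset.mem_univ i, h1⟩
  rw [h] at hpos; exact lt_irrefl 0 hpos

lemma isHermitian_of_isSymm {n : ℕ} {M : Mat n} (h : M.IsSymm) : M.IsHermitian := by
  ext i j
  simpa [Matrix.conjTranspose_apply] using h.apply i j

lemma gram_det_ne_zero {n m : ℕ} {A : Fin m → Mat n} (hLI : LinearIndependent ℝ A) :
    (Matrix.of (fun k j => ip (A k) (A j)) : Matrix (Fin m) (Fin m) ℝ).det ≠ 0 := by
  intro hdet
  obtain ⟨v, hv, hveq⟩ := (Matrix.exists_mulVec_eq_zero_iff).mpr hdet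
  have hcomb : (∑ j, v j • A j) = 0 := by
    have hip : ip (∑ k, v k • A k) (∑ j, v j • A j) = 0 := by
      rw [ip_finsum_left]
      refine Finset.sum_eq_zero fun k _ => ?_
      rw [ip_smul_left, ip_finsum_right]
      have : ∑ j, ip (A k) (v j • A j) = ∑ j, ip (A k) (A j) * v j := by
        congr 1; funext j; rw [ip_smul_right]; ring
      rw [this]
      have h0 := congrFun hveq k
      simp only [Matrix.mulVec, dotProduct, Matrix.of_apply, Pi.zero_apply] at h0
      rw [h0, mul_zero]
    exact ip_self_eq_zero hip
  have := linearIndependent_iff'.mp hLI Finset.univ v hcomb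
  exact hv (funext fun k => this k (Finset.mem_univ k))

lemma entry_tendsto {n : ℕ} {l : Filter ℝ} {F : ℝ → Mat n} {M : Mat n}
    (h : Tendsto F l (𝓝 M)) (i j : Fin n) :
    Tendsto (fun t => F t i j) l (𝓝 (M i j)) := by
  have h1 : Tendsto (fun p : Mat n => p i j) (𝓝 M) (𝓝 (M i j)) :=
    ((continuous_apply j).comp (continuous_apply i)).tendsto M
  exact h1.comp h

lemma nrm_tendsto_zero {n : ℕ} {l : Filter ℝ} {F : ℝ → Mat n} {M : Mat n}
    (h : Tendsto F l (𝓝 M)) : Tendsto (fun t => nrm (F t - M)) l (𝓝 0) := by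
  have : Tendsto (fun t => ∑ i, ∑ j, |F t i j - M i j|) l (𝓝 (∑ i : Fin n, ∑ j : Fin n, (0:ℝ))) := by
    refine tendsto_finset_sum _ fun i _ => tendsto_finset_sum _ fun j _ => ?_
    have h2 : Tendsto (fun t => |F t i j - M i j|) l (𝓝 |M i j - M i j|) :=
      ((entry_tendsto h i j).sub tendsto_const_nhds).abs
    simpa using h2
  simpa [nrm] using this

lemma ip_tendsto {n : ℕ} {l : Filter ℝ} {F G : ℝ → Mat n} {M N : Mat n}
    (hF : Tendsto F l (𝓝 M)) (hG : Tendsto G l (𝓝 N)) :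
    Tendsto (fun t => ip (F t) (G t)) l (𝓝 (ip M N)) := by
  unfold ip
  exact tendsto_finset_sum _ fun i _ => tendsto_finset_sum _ fun j _ =>
    (entry_tendsto hF i j).mul (entry_tendsto hG i j)

lemma inv_tendsto {m : ℕ} {l : Filter ℝ} {F : ℝ → Matrix (Fin m) (Fin m) ℝ}
    {G : Matrix (Fin m) (Fin m) ℝ} (hF : Tendsto F l (𝓝 G)) (hG : G.det ≠ 0) :
    Tendsto (fun t => (F t)⁻¹) l (𝓝 G⁻¹) := by
  have hdet : Tendsto (fun t => (F t).det) l (𝓝 G.det) :=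
    ((continuous_id.matrix_det).tendsto G).comp hF
  have hadj : Tendsto (fun t => (F t).adjugate) l (𝓝 G.adjugate) :=
    ((continuous_id.matrix_adjugate).tendsto G).comp hF
  have hinv : Tendsto (fun t => ((F t).det)⁻¹) l (𝓝 (G.det)⁻¹) := hdet.inv₀ hG
  have := hinv.smul hadj
  simpa [Matrix.inv_def, Ring.inverse_eq_inv'] using this

lemma mulVec_tendsto {m : ℕ} {l : Filter ℝ} {F : ℝ → Matrix (Fin m) (Fin m) ℝ}
    {G : Matrix (Fin m) (Fin m) ℝ} {v : ℝ → Fin m → ℝ} {w : Fin m → ℝ}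
    (hF : Tendsto F l (𝓝 G)) (hv : Tendsto v l (𝓝 w)) :
    Tendsto (fun t => F t *ᵥ v t) l (𝓝 (G *ᵥ w)) := by
  rw [tendsto_pi_nhds]
  intro k
  simp only [Matrix.mulVec, dotProduct]
  exact tendsto_finset_sum _ fun j _ =>
    ((((continuous_apply j).comp (continuous_apply k)).tendsto G).comp hF).mul
      (((continuous_apply j).tendsto w).comp hv)
lemma ssq_pos {n : ℕ} {x : Fin n → ℝ} (hx : x ≠ 0) : 0 < ssq x := by
  rcases (ssq_nonneg x).lt_or_eq with h | h
  · exact h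
  · exact absurd (ssq_eq_zero h.symm) hx

lemma posdef_of_margin {n : ℕ} {M : Mat n} (hherm : M.IsHermitian) {μ : ℝ} (hμ : 0 < μ)
    (h : ∀ x, μ * ssq x ≤ qd M x) : M.PosDef := by
  refine Matrix.PosDef.of_dotProduct_mulVec_pos hherm fun x hx => ?_
  have h1 := h x
  have h2 : 0 < μ * ssq x := mul_pos hμ (ssq_pos hx)
  have : 0 < qd M x := lt_of_lt_of_le h2 h1
  rw [qd_eq_dot] at this
  simpa using this

lemma isSymm_finsum {n : ℕ} {ι : Type*} [DecidableEq ι] (s : Finset ι) (f : ι → Mat n)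
    (h : ∀ i ∈ s, (f i).IsSymm) : (∑ i ∈ s, f i).IsSymm := by
  induction s using Finset.induction with
  | empty => simpa using Matrix.isSymm_zero
  | @insert a s ha ih =>
      rw [Finset.sum_insert ha]
      exact (h a (Finset.mem_insert_self a s)).add
        (ih fun i hi => h i (Finset.mem_insert_of_mem hi))

lemma eventually_margin {n : ℕ} {l : Filter ℝ} {F : ℝ → Mat n} {M : Mat n}
    (hF : Tendsto F l (𝓝 M)) {μ : ℝ} (hμ : 0 < μ) (hm : ∀ x, μ * ssq x ≤ qd M x) :
    ∀ᶠ t in l, ∀ x, (μ/2) * ssq x ≤ qd (F t) x := by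
  have hev : ∀ᶠ t in l, nrm (F t - M) < μ/2 :=
    (nrm_tendsto_zero hF).eventually_lt_const (by linarith)
  refine hev.mono fun t ht x => ?_
  have h2 := abs_qd_le (F t - M) x
  have hft : M + (F t - M) = F t := by abel
  have h3 : qd (F t) x = qd M x + qd (F t - M) x := by rw [← qd_add, hft]
  have h4 : nrm (F t - M) * ssq x ≤ (μ/2) * ssq x :=
    mul_le_mul_of_nonneg_right ht.le (ssq_nonneg x)
  have h5 : -(nrm (F t - M) * ssq x) ≤ qd (F t - M) x := (abs_le.mp h2).1
  have := hm x
  linarith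

lemma correction {n m : ℕ} {l : Filter ℝ}
    (A₀ : ℝ → Mat n) (A : Fin m → ℝ → Mat n) (b : ℝ → Fin m → ℝ)
    (hAsymm : ∀ k t, (A k t).IsSymm)
    (hA₀cont : Tendsto A₀ l (𝓝 (A₀ 0)))
    (hAcont : ∀ k, Tendsto (A k) l (𝓝 (A k 0)))
    (hbcont : Tendsto b l (𝓝 (b 0)))
    (hLI : LinearIndependent ℝ (fun k => A k 0))
    {B : Mat n} (hBsymm : B.IsSymm) {μB : ℝ} (hμB : 0 < μB)
    (hBmarg : ∀ x, μB * ssq x ≤ qd B x)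
    (hBfeas : ∀ k, ip (A k 0) B = b 0 k) :
    ∃ Y : ℝ → Mat n,
      (∀ᶠ t in l, (Y t).PosSemidef ∧ ∀ k, ip (A k t) (Y t) = b t k) ∧
      Tendsto (fun t => ip (A₀ t) (Y t)) l (𝓝 (ip (A₀ 0) B)) := by
  classical
  set M : ℝ → Matrix (Fin m) (Fin m) ℝ :=
    fun t => Matrix.of (fun k j => ip (A k t) (A j 0)) with hMdef
  have hG : M 0 = Matrix.of (fun k j => ip (A k 0) (A j 0)) := rfl
  have hdetG : (M 0).det ≠ 0 := by rw [hG]; exact gram_det_ne_zero hLI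
  have hMcont : Tendsto M l (𝓝 (M 0)) := by
    refine tendsto_pi_nhds.mpr fun k => ?_
    rw [tendsto_pi_nhds]; intro j
    exact ip_tendsto (hAcont k) tendsto_const_nhds
  set r : ℝ → Fin m → ℝ := fun t k => b t k - ip (A k t) B with hrdef
  have hr0 : r 0 = 0 := by
    funext k; simp [hrdef, hBfeas k]
  have hrcont : Tendsto r l (𝓝 0) := by
    rw [← hr0]
    rw [tendsto_pi_nhds]; intro k
    have h1 : Tendsto (fun t => b t k) l (𝓝 (b 0 k)) :=
      ((continuous_apply k).tendsto (b 0)).comp hbcont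
    exact h1.sub (ip_tendsto (hAcont k) tendsto_const_nhds)
  set c : ℝ → Fin m → ℝ := fun t => (M t)⁻¹ *ᵥ r t with hcdef
  have hccont : Tendsto c l (𝓝 0) := by
    have := mulVec_tendsto (inv_tendsto hMcont hdetG) hrcont
    simpa using this
  set Y : ℝ → Mat n := fun t => B + ∑ j, c t j • A j 0 with hYdef
  have hYcont : Tendsto Y l (𝓝 B) := by
    have h1 : Tendsto (fun t => ∑ j, c t j • A j 0) l (𝓝 (∑ j : Fin m, (0:ℝ) • A j 0)) := by
      refine tendsto_finset_sum _ fun j _ => Tendsto.smul_const ?_ (A j 0)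
      exact ((continuous_apply j).tendsto (0 : Fin m → ℝ)).comp hccont
    have h2 := (tendsto_const_nhds (x := B) (f := l)).add h1
    simpa using h2
  have hYsymm : ∀ t, (Y t).IsSymm := fun t =>
    hBsymm.add (isSymm_finsum _ _ fun j _ => (hAsymm j 0).smul _)
  have hdetev : ∀ᶠ t in l, (M t).det ≠ 0 :=
    (((continuous_id.matrix_det).tendsto (M 0)).comp hMcont).eventually_ne hdetG
  have hfeas : ∀ᶠ t in l, ∀ k, ip (A k t) (Y t) = b t k := by
    refine hdetev.mono fun t ht k => ?_
    have hMc : M t *ᵥ c t = r t := by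
      rw [hcdef]
      simp only [Matrix.mulVec_mulVec]
      rw [Matrix.mul_nonsing_inv _ (isUnit_iff_ne_zero.mpr ht), Matrix.one_mulVec]
    have h1 : ip (A k t) (Y t) = ip (A k t) B + ∑ j, c t j * ip (A k t) (A j 0) := by
      rw [hYdef]
      simp only [ip_add_right, ip_finsum_right]
      congr 1
      exact Finset.sum_congr rfl fun j _ => ip_smul_right _ _ _
    have h2 : ∑ j, c t j * ip (A k t) (A j 0) = (M t *ᵥ c t) k := by
      simp only [Matrix.mulVec, dotProduct, hMdef, Matrix.of_apply]
      exact Finset.sum_congr rfl fun j _ => mul_comm _ _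
    rw [h1, h2, hMc, hrdef]
    ring
  have hpsd : ∀ᶠ t in l, (Y t).PosSemidef := by
    have hev : ∀ᶠ t in l, nrm (Y t - B) < μB :=
      (nrm_tendsto_zero hYcont).eventually_lt_const hμB
    refine hev.mono fun t ht => ?_
    refine (posSemidef_iff_qd (isHermitian_of_isSymm (hYsymm t))).mpr fun x => ?_
    have h2 := abs_qd_le (Y t - B) x
    have hft : B + (Y t - B) = Y t := by abel
    have h3 : qd (Y t) x = qd B x + qd (Y t - B) x := by rw [← qd_add, hft]
    have h4 : nrm (Y t - B) * ssq x ≤ μB * ssq x :=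
      mul_le_mul_of_nonneg_right ht.le (ssq_nonneg x)
    have h5 : -(nrm (Y t - B) * ssq x) ≤ qd (Y t - B) x := (abs_le.mp h2).1
    have := hBmarg x
    linarith
  exact ⟨Y, hpsd.and hfeas |>.mono (fun t ht => ht), ip_tendsto hA₀cont hYcont⟩
lemma isSymm_of_isHermitian {n : ℕ} {M : Mat n} (h : M.IsHermitian) : M.IsSymm := by
  ext i j
  simpa [Matrix.conjTranspose_apply] using (congrFun (congrFun h j) i).symm

lemma nrm_sub_comm {n : ℕ} (A B : Mat n) : nrm (A - B) = nrm (B - A) := by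
  simp [nrm, abs_sub_comm]

lemma qd_one {n : ℕ} (x : Fin n → ℝ) : qd (1 : Mat n) x = ssq x := by
  unfold qd ssq
  refine Finset.sum_congr rfl fun i _ => ?_
  have h : ∀ j, x i * (1 : Mat n) i j * x j = if j = i then x i ^ 2 else 0 := by
    intro j
    by_cases h : j = i
    · subst h; simp [Matrix.one_apply]; ring
    · simp [Matrix.one_apply, Ne.symm h, h]
  simp_rw [h]
  simp

lemma mulVec_entry_bound {m : ℕ} (P : Matrix (Fin m) (Fin m) ℝ) (r : Fin m → ℝ) (η : ℝ)
    (hr : ∀ k, |r k| ≤ η) (j : Fin m) : |(P *ᵥ r) j| ≤ (∑ j', ∑ k, |P j' k|) * η := by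
  have hη : 0 ≤ η := le_trans (abs_nonneg _) (hr j)
  have h1 : |(P *ᵥ r) j| ≤ ∑ k, |P j k| * η := by
    simp only [Matrix.mulVec, dotProduct]
    refine (Finset.abs_sum_le_sum_abs _ _).trans (Finset.sum_le_sum fun k _ => ?_)
    rw [abs_mul]
    exact mul_le_mul_of_nonneg_left (hr k) (abs_nonneg _)
  refine h1.trans ?_
  rw [← Finset.sum_mul]
  refine mul_le_mul_of_nonneg_right ?_ hη
  exact Finset.single_le_sum (f := fun j' => ∑ k, |P j' k|)
    (fun j' _ => Finset.sum_nonneg fun k _ => abs_nonneg _) (Finset.mem_univ j)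

lemma ip_ge_trace {n : ℕ} {Sm X : Mat n} (hS : Sm.IsSymm) (hX : X.PosSemidef) {μ : ℝ}
    (hm : ∀ x, μ * ssq x ≤ qd Sm x) : μ * (∑ i, X i i) ≤ ip Sm X := by
  have hpsd : (Sm - μ • (1 : Mat n)).PosSemidef := by
    refine (posSemidef_iff_qd (isHermitian_of_isSymm (hS.sub ((Matrix.isSymm_one).smul μ)))).mpr
      fun x => ?_
    rw [qd_sub, qd_smul, qd_one]
    linarith [hm x]
  have h0 := ip_psd_nonneg hpsd hX
  rw [ip_sub_left, ip_smul_left, ip_one_left] at h0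
  linarith
set_option maxHeartbeats 2000000 in
/-- If both the primal and dual SDP are strictly feasible and `A₁, …, A_m` are
linearly independent, then for perturbed data continuous at `t = 0`, the
perturbed primal and dual SDPs are feasible for all sufficiently small `t` and the
optimal value of the perturbed dual SDP varies continuously at `t = 0`. -/
theorem dual_optimal_value_continuous_of_linearIndependent (n m : ℕ) (δ : ℝ) (hδ : 0 < δ)
    (A₀ : ℝ → Mat n) (A : Fin m → ℝ → Mat n) (b : ℝ → Fin m → ℝ)
    (hA₀symm : ∀ t, (A₀ t).IsSymm) (hAsymm : ∀ k t, (A k t).IsSymm)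
    (hA₀cont : Tendsto A₀ (nhdsWithin 0 (Icc 0 δ)) (nhds (A₀ 0)))
    (hAcont : ∀ k, Tendsto (A k) (nhdsWithin 0 (Icc 0 δ)) (nhds (A k 0)))
    (hbcont : Tendsto b (nhdsWithin 0 (Icc 0 δ)) (nhds (b 0)))
    (hPstrict : ∃ y : Fin m → ℝ, (A₀ 0 - ∑ k, y k • A k 0).PosDef)
    (hDstrict : ∃ X : Mat n, X.PosDef ∧ ∀ k, ip (A k 0) X = b 0 k)
    (hLI : LinearIndependent ℝ (fun k => A k 0)) :
    ∃ δ' : ℝ, 0 < δ' ∧ δ' ≤ δ ∧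
      (∀ t ∈ Icc (0:ℝ) δ',
        (∃ y : Fin m → ℝ, (A₀ t - ∑ k, y k • A k t).PosSemidef) ∧
        (∃ X : Mat n, X.PosSemidef ∧ ∀ k, ip (A k t) X = b t k)) ∧
      Tendsto (fun t => sInf (dualVals (A₀ t) (fun k => A k t) (b t)))
        (nhdsWithin 0 (Icc 0 δ'))
        (nhds (sInf (dualVals (A₀ 0) (fun k => A k 0) (b 0)))) := by
  classical
  obtain ⟨y, hy⟩ := hPstrict
  obtain ⟨X₀, hX₀pd, hX₀feas⟩ := hDstrict
  set l : Filter ℝ := nhdsWithin 0 (Icc 0 δ) with hl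
  set S : ℝ → Mat n := fun t => A₀ t - ∑ k, y k • A k t with hS
  set v : ℝ → ℝ := fun t => sInf (dualVals (A₀ t) (fun k => A k t) (b t)) with hv
  have hScont : Tendsto S l (𝓝 (S 0)) :=
    hA₀cont.sub (tendsto_finset_sum _ fun k _ => ((hAcont k).const_smul (y k)))
  have hSsymm : ∀ t, (S t).IsSymm := fun t =>
    (hA₀symm t).sub (isSymm_finsum _ _ fun k _ => (hAsymm k t).smul _)
  have hS0pd : (S 0).PosDef := hy
  obtain ⟨μS, hμS, hmargS⟩ := posdef_margin hS0pd
  obtain ⟨μX, hμX, hmargX⟩ := posdef_margin hX₀pd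
  have hX₀symm : X₀.IsSymm := isSymm_of_isHermitian hX₀pd.1
  have hSmarg : ∀ᶠ t in l, ∀ x, (μS/2) * ssq x ≤ qd (S t) x := eventually_margin hScont hμS hmargS
  have hSpsd : ∀ᶠ t in l, (S t).PosSemidef := hSmarg.mono fun t ht =>
    (posSemidef_iff_qd (isHermitian_of_isSymm (hSsymm t))).mpr fun x =>
      le_trans (mul_nonneg (by linarith) (ssq_nonneg x)) (ht x)
  -- lower bound on dual values
  have hlb : ∀ t, (S t).PosSemidef →
      ∀ w ∈ dualVals (A₀ t) (fun k => A k t) (b t), ∑ k, y k * b t k ≤ w := by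
    intro t hSt w hw
    obtain ⟨X, ⟨hXpsd, hXfeas⟩, rfl⟩ := hw
    have hA0t : A₀ t = S t + ∑ k, y k • A k t := by simp [hS]
    have hdecomp : ip (A₀ t) X = ip (S t) X + ∑ k, y k * b t k := by
      rw [hA0t, ip_add_left, ip_finsum_left]
      congr 1
      refine Finset.sum_congr rfl fun k _ => ?_
      rw [ip_smul_left, hXfeas k]
    rw [hdecomp]
    have := ip_psd_nonneg hSt hXpsd
    linarith
  have hS0psd : (S 0).PosSemidef := hS0pd.posSemidef
  have hne0 : (dualVals (A₀ 0) (fun k => A k 0) (b 0)).Nonempty :=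
    ⟨ip (A₀ 0) X₀, X₀, ⟨hX₀pd.posSemidef, hX₀feas⟩, rfl⟩
  have hbdd0 : BddBelow (dualVals (A₀ 0) (fun k => A k 0) (b 0)) :=
    ⟨∑ k, y k * b 0 k, fun w hw => hlb 0 hS0psd w hw⟩
  -- dual feasibility eventually
  obtain ⟨Y₀, hY₀ev, _⟩ := correction A₀ A b hAsymm hA₀cont hAcont hbcont hLI
    hX₀symm hμX hmargX hX₀feas
  have hdual : ∀ᶠ t in l, ∃ X : Mat n, X.PosSemidef ∧ ∀ k, ip (A k t) X = b t k :=
    hY₀ev.mono fun t ht => ⟨Y₀ t, ht.1, ht.2⟩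
  have hne : ∀ᶠ t in l, (dualVals (A₀ t) (fun k => A k t) (b t)).Nonempty :=
    hdual.mono fun t ⟨X, h1, h2⟩ => ⟨ip (A₀ t) X, X, ⟨h1, h2⟩, rfl⟩
  have hbdd : ∀ᶠ t in l, BddBelow (dualVals (A₀ t) (fun k => A k t) (b t)) :=
    hSpsd.mono fun t ht => ⟨∑ k, y k * b t k, fun w hw => hlb t ht w hw⟩
  -- upper semicontinuity
  have husc : ∀ ε : ℝ, 0 < ε → ∀ᶠ t in l, v t < v 0 + ε := by
    intro ε hε
    obtain ⟨w, hwmem, hwlt⟩ := exists_lt_of_csInf_lt hne0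
      (lt_add_of_pos_right (v 0) (by linarith : (0:ℝ) < ε/4))
    obtain ⟨Xs, ⟨hXspsd, hXsfeas⟩, rfl⟩ := hwmem
    have hXssymm : Xs.IsSymm := isSymm_of_isHermitian hXspsd.1
    set D : ℝ := |ip (A₀ 0) X₀| + |ip (A₀ 0) Xs| + 1 with hD
    have hden : 0 < D := by positivity
    set lam : ℝ := min (1/2) (ε / (4 * D)) with hlam
    have hlam0 : 0 < lam := lt_min (by norm_num) (div_pos hε (by linarith))
    have hlam1 : lam ≤ 1/2 := min_le_left _ _
    have hlam2 : lam * D ≤ ε/4 := by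
      have h := min_le_right (1/2 : ℝ) (ε / (4 * D))
      calc lam * D ≤ (ε/(4*D)) * D := mul_le_mul_of_nonneg_right h hden.le
        _ = ε/4 := by field_simp
    set XL : Mat n := Xs + lam • (X₀ - Xs) with hXL
    have hXLsymm : XL.IsSymm := hXssymm.add ((hX₀symm.sub hXssymm).smul _)
    have hXLmarg : ∀ x, (lam * μX) * ssq x ≤ qd XL x := by
      intro x
      rw [hXL, qd_add, qd_smul, qd_sub]
      nlinarith [mul_nonneg (by linarith : (0:ℝ) ≤ 1 - lam) (posSemidef_qd hXspsd x),
        mul_le_mul_of_nonneg_left (hmargX x) hlam0.le]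
    have hXLfeas : ∀ k, ip (A k 0) XL = b 0 k := by
      intro k
      rw [hXL, ip_add_right, ip_smul_right, ip_sub_right, hXsfeas k, hX₀feas k]
      ring
    have hXLobj : ip (A₀ 0) XL ≤ v 0 + ε/2 := by
      rw [hXL, ip_add_right, ip_smul_right, ip_sub_right]
      have h0 : ip (A₀ 0) X₀ - ip (A₀ 0) Xs ≤ D := by
        have h1 := le_abs_self (ip (A₀ 0) X₀)
        have h2 := neg_abs_le (ip (A₀ 0) Xs)
        rw [hD]; linarith
      have h1 : lam * (ip (A₀ 0) X₀ - ip (A₀ 0) Xs) ≤ ε/4 :=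
        le_trans (mul_le_mul_of_nonneg_left h0 hlam0.le) hlam2
      linarith [hwlt]
    obtain ⟨Y, hYev, hYobj⟩ := correction A₀ A b hAsymm hA₀cont hAcont hbcont hLI
      hXLsymm (mul_pos hlam0 hμX) hXLmarg hXLfeas
    have hYlt : ∀ᶠ t in l, ip (A₀ t) (Y t) < v 0 + (3/4)*ε :=
      hYobj.eventually_lt_const (by linarith)
    refine (hYev.and (hYlt.and hbdd)).mono fun t ⟨h1, h2, h3⟩ => ?_
    have hmem : ip (A₀ t) (Y t) ∈ dualVals (A₀ t) (fun k => A k t) (b t) :=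
      ⟨Y t, ⟨h1.1, h1.2⟩, rfl⟩
    have h4 := csInf_le h3 hmem
    have : v t ≤ ip (A₀ t) (Y t) := h4
    linarith
  -- lower semicontinuity
  have hlsc : ∀ ε : ℝ, 0 < ε → ∀ᶠ t in l, v 0 - ε < v t := by
    intro ε hε
    set G : Matrix (Fin m) (Fin m) ℝ := Matrix.of (fun k j => ip (A k 0) (A j 0)) with hG
    have hdetG : G.det ≠ 0 := gram_det_ne_zero hLI
    set KG : ℝ := ∑ j, ∑ k, |(G⁻¹) j k| with hKG
    have hKG0 : 0 ≤ KG := Finset.sum_nonneg fun _ _ => Finset.sum_nonneg fun _ _ => abs_nonneg _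
    set C : ℝ := v 0 + 2 - (∑ k, y k * b 0 k) + (∑ k, |y k|) with hC
    set R : ℝ := 2 * max C 0 / μS + 1 with hR
    have hmaxC : 0 ≤ max C 0 := le_max_right _ _
    have hR1 : 0 ≤ 2 * max C 0 / μS := div_nonneg (by linarith) hμS.le
    have hR0 : 0 < R := by rw [hR]; linarith
    have hnrmA0 : 0 ≤ nrm (A₀ 0) := Finset.sum_nonneg fun _ _ =>
      Finset.sum_nonneg fun _ _ => abs_nonneg _
    set D1 : ℝ := nrm (A₀ 0) * R + |ip (A₀ 0) X₀| + 1 with hD1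
    have hD10 : 0 < D1 := by
      have := mul_nonneg hnrmA0 hR0.le
      have := abs_nonneg (ip (A₀ 0) X₀)
      rw [hD1]; linarith
    set θ : ℝ := min (1/2) (ε / (8 * D1)) with hθ
    have hθ0 : 0 < θ := lt_min (by norm_num) (div_pos hε (by linarith))
    have hθhalf : θ ≤ 1/2 := min_le_left _ _
    have hθ2 : θ * D1 ≤ ε/8 := by
      have h := min_le_right (1/2 : ℝ) (ε / (8 * D1))
      calc θ * D1 ≤ (ε/(8*D1)) * D1 := mul_le_mul_of_nonneg_right h hD10.le
        _ = ε/8 := by field_simp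
    have hnrmsum : 0 ≤ ∑ j, nrm (A j 0) := Finset.sum_nonneg fun j _ =>
      Finset.sum_nonneg fun _ _ => Finset.sum_nonneg fun _ _ => abs_nonneg _
    have hipsum : 0 ≤ ∑ j, |ip (A₀ 0) (A j 0)| := Finset.sum_nonneg fun _ _ => abs_nonneg _
    set K1 : ℝ := KG * (∑ j, nrm (A j 0)) + 1 with hK1
    have hK10 : 0 < K1 := by
      have := mul_nonneg hKG0 hnrmsum
      rw [hK1]; linarith
    set K2 : ℝ := KG * (∑ j, |ip (A₀ 0) (A j 0)|) + 1 with hK2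
    have hK20 : 0 < K2 := by
      have := mul_nonneg hKG0 hipsum
      rw [hK2]; linarith
    set η : ℝ := min (θ * μX / K1) (ε / (8 * K2)) with hη
    have hη0 : 0 < η := lt_min (div_pos (mul_pos hθ0 hμX) hK10) (div_pos hε (by linarith))
    have hηK1 : KG * η * (∑ j, nrm (A j 0)) ≤ θ * μX := by
      have h := min_le_left (θ * μX / K1) (ε / (8 * K2))
      have h2 : η * (KG * (∑ j, nrm (A j 0))) ≤ (θ * μX / K1) * K1 := by
        have e1 : η * (KG * (∑ j, nrm (A j 0))) ≤ η * K1 := by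
          refine mul_le_mul_of_nonneg_left ?_ hη0.le
          rw [hK1]; linarith
        refine e1.trans (mul_le_mul_of_nonneg_right h hK10.le)
      have h3 : (θ * μX / K1) * K1 = θ * μX := by field_simp
      nlinarith
    have hηK2 : KG * η * (∑ j, |ip (A₀ 0) (A j 0)|) ≤ ε/8 := by
      have h := min_le_right (θ * μX / K1) (ε / (8 * K2))
      have h2 : η * (KG * (∑ j, |ip (A₀ 0) (A j 0)|)) ≤ (ε / (8 * K2)) * K2 := by
        have e1 : η * (KG * (∑ j, |ip (A₀ 0) (A j 0)|)) ≤ η * K2 := by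
          refine mul_le_mul_of_nonneg_left ?_ hη0.le
          rw [hK2]; linarith
        refine e1.trans (mul_le_mul_of_nonneg_right h hK20.le)
      have h3 : (ε / (8 * K2)) * K2 = ε/8 := by field_simp
      nlinarith
    set εp : ℝ := min (ε/8) 1 with hεp
    have hεp0 : 0 < εp := lt_min (by linarith) one_pos
    have hεp1 : εp ≤ 1 := min_le_right _ _
    have hεp8 : εp ≤ ε/8 := min_le_left _ _
    -- eventual events
    have hvub := husc 1 one_pos
    have hb1 : ∀ᶠ t in l, dist (b t) (b 0) < min (η/2) 1 :=
      Metric.tendsto_nhds.mp hbcont _ (lt_min (by linarith) one_pos)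
    have hAk : ∀ᶠ t in l, ∀ k, nrm (A k t - A k 0) < η/(2*R) := by
      rw [eventually_all]
      intro k
      exact (nrm_tendsto_zero (hAcont k)).eventually_lt_const
        (div_pos hη0 (by linarith))
    have hA0cl : ∀ᶠ t in l, nrm (A₀ t - A₀ 0) < ε/(8*R) :=
      (nrm_tendsto_zero hA₀cont).eventually_lt_const (div_pos hε (by linarith))
    refine (hvub.and (hSmarg.and (hne.and (hb1.and (hAk.and hA0cl))))).mono
      fun t ⟨h1, h2, h4, h6, h7, h8⟩ => ?_
    -- choose near-optimal X at t
    obtain ⟨w, hwmem, hwlt⟩ := exists_lt_of_csInf_lt h4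
      (lt_add_of_pos_right (v t) hεp0)
    obtain ⟨X, ⟨hXpsd, hXfeas⟩, rfl⟩ := hwmem
    have hXsymm : X.IsSymm := isSymm_of_isHermitian hXpsd.1
    have hbk : ∀ k, |b t k - b 0 k| ≤ min (η/2) 1 := by
      intro k
      have := dist_le_pi_dist (b t) (b 0) k
      rw [Real.dist_eq] at this
      exact this.trans h6.le
    -- value and trace bounds
    have hA0t : A₀ t = S t + ∑ k, y k • A k t := by simp [hS]
    have hdecomp : ip (A₀ t) X = ip (S t) X + ∑ k, y k * b t k := by
      rw [hA0t, ip_add_left, ip_finsum_left]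
      congr 1
      exact Finset.sum_congr rfl fun k _ => by rw [ip_smul_left, hXfeas k]
    have hyb : ∑ k, y k * b 0 k - ∑ k, |y k| ≤ ∑ k, y k * b t k := by
      rw [← Finset.sum_sub_distrib]
      refine Finset.sum_le_sum fun k _ => ?_
      have h9 : |y k * (b t k - b 0 k)| ≤ |y k| * 1 := by
        rw [abs_mul]
        exact mul_le_mul_of_nonneg_left ((hbk k).trans (min_le_right _ _)) (abs_nonneg _)
      have := (abs_le.mp h9).1
      nlinarith [le_abs_self (y k * (b t k - b 0 k))]
    have hvtub : v t < v 0 + 1 := h1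
    have hipval : ip (A₀ t) X < v 0 + 2 := by
      have := hwlt
      linarith
    have hipS : ip (S t) X ≤ max C 0 := by
      have : ip (S t) X ≤ C := by rw [hC]; linarith [hdecomp, hyb, hipval]
      exact this.trans (le_max_left _ _)
    have htrace : (μS/2) * (∑ i, X i i) ≤ ip (S t) X := ip_ge_trace (hSsymm t) hXpsd h2
    have htrR : ∑ i, X i i ≤ R := by
      have h10 : (μS/2) * (∑ i, X i i) ≤ max C 0 := htrace.trans hipS
      have h11 : ∑ i, X i i ≤ 2 * max C 0 / μS := by
        rw [le_div_iff₀ hμS]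
        nlinarith
      rw [hR]; linarith
    have hXentry : ∀ i j, |X i j| ≤ R := fun i j => (psd_entry_le_trace hXpsd i j).trans htrR
    -- corrected matrix
    set Xθ : Mat n := X + θ • (X₀ - X) with hXθ
    have hXθsymm : Xθ.IsSymm := hXsymm.add ((hX₀symm.sub hXsymm).smul _)
    have hXθmarg : ∀ x, (θ * μX) * ssq x ≤ qd Xθ x := by
      intro x
      rw [hXθ, qd_add, qd_smul, qd_sub]
      nlinarith [mul_nonneg (by linarith : (0:ℝ) ≤ 1 - θ) (posSemidef_qd hXpsd x),
        mul_le_mul_of_nonneg_left (hmargX x) hθ0.le]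
    set rv : Fin m → ℝ := fun k => b 0 k - ip (A k 0) Xθ with hrv
    have hrk : ∀ k, |rv k| ≤ η := by
      intro k
      have e1 : ip (A k 0) Xθ = (1-θ) * ip (A k 0) X + θ * b 0 k := by
        rw [hXθ, ip_add_right, ip_smul_right, ip_sub_right, hX₀feas k]; ring
      have e2 : ip (A k 0) X = b t k + ip (A k 0 - A k t) X := by
        rw [ip_sub_left, hXfeas k]; ring
      have e3 : |ip (A k 0 - A k t) X| ≤ nrm (A k 0 - A k t) * R :=
        abs_ip_le_nrm _ _ R hXentry
      have e4 : nrm (A k 0 - A k t) ≤ η/(2*R) := by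
        rw [nrm_sub_comm]; exact (h7 k).le
      have e5 : rv k = (1-θ) * ((b 0 k - b t k) - ip (A k 0 - A k t) X) := by
        rw [hrv]
        simp only
        rw [e1, e2]; ring
      rw [e5, abs_mul]
      have hb' : |b 0 k - b t k| ≤ η/2 := by
        rw [abs_sub_comm]; exact (hbk k).trans (min_le_left _ _)
      have e6 : |(b 0 k - b t k) - ip (A k 0 - A k t) X| ≤ η/2 + η/2 := by
        have e7 : nrm (A k 0 - A k t) * R ≤ η/2 := by
          have := mul_le_mul_of_nonneg_right e4 hR0.le
          calc nrm (A k 0 - A k t) * R ≤ η/(2*R) * R := this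
            _ = η/2 := by field_simp
        calc |(b 0 k - b t k) - ip (A k 0 - A k t) X|
            ≤ |b 0 k - b t k| + |ip (A k 0 - A k t) X| := abs_sub _ _
          _ ≤ η/2 + η/2 := add_le_add hb' (e3.trans e7)
      have e8 : |1 - θ| ≤ 1 := by rw [abs_of_nonneg (by linarith)]; linarith
      calc |1-θ| * |(b 0 k - b t k) - ip (A k 0 - A k t) X| ≤ 1 * (η/2 + η/2) :=
            mul_le_mul e8 e6 (abs_nonneg _) one_pos.le
        _ = η := by ring
    set d : Fin m → ℝ := G⁻¹ *ᵥ rv with hd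
    have hdk : ∀ j, |d j| ≤ KG * η := fun j => mulVec_entry_bound _ _ η hrk j
    set X' : Mat n := Xθ + ∑ j, d j • A j 0 with hX'
    have hX'symm : X'.IsSymm :=
      hXθsymm.add (isSymm_finsum _ _ fun j _ => (hAsymm j 0).smul _)
    have hX'psd : X'.PosSemidef := by
      refine (posSemidef_iff_qd (isHermitian_of_isSymm hX'symm)).mpr fun x => ?_
      rw [hX', qd_add, qd_finsum]
      have hpert : |∑ j, qd (d j • A j 0) x| ≤ (θ * μX) * ssq x := by
        refine (Finset.abs_sum_le_sum_abs _ _).trans ?_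
        have e1 : ∀ j, |qd (d j • A j 0) x| ≤ (KG * η * nrm (A j 0)) * ssq x := by
          intro j
          rw [qd_smul, abs_mul]
          have := abs_qd_le (A j 0) x
          calc |d j| * |qd (A j 0) x| ≤ (KG * η) * (nrm (A j 0) * ssq x) := by
                refine mul_le_mul (hdk j) (abs_qd_le (A j 0) x) (abs_nonneg _)
                  (mul_nonneg hKG0 hη0.le)
            _ = (KG * η * nrm (A j 0)) * ssq x := by ring
        refine (Finset.sum_le_sum fun j _ => e1 j).trans ?_
        rw [← Finset.sum_mul, ← Finset.mul_sum]
        exact mul_le_mul_of_nonneg_right hηK1 (ssq_nonneg x)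
      have := hXθmarg x
      have := (abs_le.mp hpert).1
      linarith
    have hX'feas : ∀ k, ip (A k 0) X' = b 0 k := by
      intro k
      rw [hX', ip_add_right, ip_finsum_right]
      have e1 : ∑ j, ip (A k 0) (d j • A j 0) = (G *ᵥ d) k := by
        simp only [Matrix.mulVec, dotProduct, hG, Matrix.of_apply]
        exact Finset.sum_congr rfl fun j _ => by rw [ip_smul_right]; ring
      rw [e1, hd, Matrix.mulVec_mulVec,
        Matrix.mul_nonsing_inv _ (isUnit_iff_ne_zero.mpr hdetG), Matrix.one_mulVec]
      rw [hrv]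
      simp
    have hv0le : v 0 ≤ ip (A₀ 0) X' :=
      csInf_le hbdd0 ⟨X', ⟨hX'psd, hX'feas⟩, rfl⟩
    -- objective chain
    have o1 : ip (A₀ 0) X' = ip (A₀ 0) Xθ + ∑ j, d j * ip (A₀ 0) (A j 0) := by
      rw [hX', ip_add_right, ip_finsum_right]
      congr 1
      exact Finset.sum_congr rfl fun j _ => ip_smul_right _ _ _
    have o2 : ∑ j, d j * ip (A₀ 0) (A j 0) ≤ ε/8 := by
      have e1 : ∑ j, d j * ip (A₀ 0) (A j 0) ≤ ∑ j, (KG * η) * |ip (A₀ 0) (A j 0)| := by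
        refine Finset.sum_le_sum fun j _ => ?_
        calc d j * ip (A₀ 0) (A j 0) ≤ |d j * ip (A₀ 0) (A j 0)| := le_abs_self _
          _ = |d j| * |ip (A₀ 0) (A j 0)| := abs_mul _ _
          _ ≤ (KG * η) * |ip (A₀ 0) (A j 0)| :=
              mul_le_mul_of_nonneg_right (hdk j) (abs_nonneg _)
      rw [← Finset.mul_sum] at e1
      exact e1.trans hηK2
    have o3 : ip (A₀ 0) Xθ = ip (A₀ 0) X + θ * (ip (A₀ 0) X₀ - ip (A₀ 0) X) := by
      rw [hXθ, ip_add_right, ip_smul_right, ip_sub_right]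
    have o4 : |ip (A₀ 0) X| ≤ nrm (A₀ 0) * R := abs_ip_le_nrm _ _ R hXentry
    have o5 : θ * (ip (A₀ 0) X₀ - ip (A₀ 0) X) ≤ ε/8 := by
      have e1 : ip (A₀ 0) X₀ - ip (A₀ 0) X ≤ D1 := by
        have := le_abs_self (ip (A₀ 0) X₀)
        have := (abs_le.mp o4).1
        rw [hD1]; linarith
      exact (mul_le_mul_of_nonneg_left e1 hθ0.le).trans hθ2
    have o6 : ip (A₀ 0) X ≤ ip (A₀ t) X + ε/8 := by
      have e1 : ip (A₀ 0) X = ip (A₀ t) X + ip (A₀ 0 - A₀ t) X := by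
        rw [ip_sub_left]; ring
      have e2 : |ip (A₀ 0 - A₀ t) X| ≤ nrm (A₀ 0 - A₀ t) * R := abs_ip_le_nrm _ _ R hXentry
      have e3 : nrm (A₀ 0 - A₀ t) * R ≤ ε/8 := by
        rw [nrm_sub_comm]
        have := mul_le_mul_of_nonneg_right h8.le hR0.le
        calc nrm (A₀ t - A₀ 0) * R ≤ ε/(8*R) * R := this
          _ = ε/8 := by field_simp
      have := (le_abs_self (ip (A₀ 0 - A₀ t) X)).trans (e2.trans e3)
      linarith
    have final : v 0 ≤ v t + εp + 3*(ε/8) := by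
      have := hwlt
      linarith [hv0le, o1, o2, o3, o5, o6]
    linarith
  -- assemble
  have hvt : Tendsto v l (𝓝 (v 0)) := by
    rw [Metric.tendsto_nhds]
    intro ε hε
    refine ((husc (ε/2) (by linarith)).and (hlsc (ε/2) (by linarith))).mono fun t ⟨h1, h2⟩ => ?_
    rw [Real.dist_eq, abs_lt]
    constructor <;> linarith
  have hfeasev : ∀ᶠ t in l,
      (∃ y' : Fin m → ℝ, (A₀ t - ∑ k, y' k • A k t).PosSemidef) ∧
      (∃ X : Mat n, X.PosSemidef ∧ ∀ k, ip (A k t) X = b t k) :=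
    (hSpsd.mono fun t ht => ⟨y, ht⟩).and hdual
  rw [hl, eventually_nhdsWithin_iff, Metric.eventually_nhds_iff] at hfeasev
  obtain ⟨r, hr, hrP⟩ := hfeasev
  refine ⟨min δ (r/2), lt_min hδ (by linarith), min_le_left _ _, ?_, ?_⟩
  · intro t ht
    have h1 : t ≤ r/2 := le_trans ht.2 (min_le_right _ _)
    have hdist : dist t 0 < r := by
      rw [Real.dist_eq, sub_zero, abs_of_nonneg ht.1]; linarith
    exact hrP hdist ⟨ht.1, le_trans ht.2 (min_le_left _ _)⟩
  · exact hvt.mono_left (nhdsWithin_mono _ (Icc_subset_Icc le_rfl (min_le_left _ _)))
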